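/- Let 0 < δ < π/2, α > 0, and let s : (0,δ) → ℝ be continuous and nowhere zero, with ∫₀^θ |s(τ)·cot(τ)| dτ < ∞ for all θ ∈ (0,δ). Set R(θ) = ∫₀^θ s(τ)·cot(τ) dτ and μ(θ) = 1 + s(θ)/R(θ). Suppose s(θ)/sin^α(θ) tends to a limit γ ∈ ℝ with γ ≠ 0 as θ → 0⁺, and that μ(θ) tends to a limit μ_p ∈ ℝ as θ → 0⁺. Then μ_p = α + 1. -/

import Mathlib

open Set Filter MeasureTheory intervalIntegral Real Topology

/-- Main umbilic-slope theorem (equality case): if `s(θ)/sin^α θ → γ ≠ 0` and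
`μ(θ) = 1 + s(θ)/∫₀^θ s cot → μ_p` as `θ → 0⁺`, then `μ_p = α + 1`. -/
theorem stmt_4 (δ α γ μ_p : ℝ) (hδ0 : 0 < δ) (hδ : δ < Real.pi / 2) (hα : 0 < α)
    (s : ℝ → ℝ) (hs : ContinuousOn s (Set.Ioo 0 δ))
    (hsne : ∀ θ ∈ Set.Ioo 0 δ, s θ ≠ 0)
    (hint : ∀ θ ∈ Set.Ioo 0 δ,
      IntervalIntegrable (fun τ => s τ * Real.cot τ) MeasureTheory.volume 0 θ)
    (hγ : Filter.Tendsto (fun θ => s θ / Real.sin θ ^ α)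
      (nhdsWithin 0 (Set.Ioi 0)) (nhds γ))
    (hγ0 : γ ≠ 0)
    (hμ : Filter.Tendsto (fun θ => 1 + s θ / ∫ τ in (0:ℝ)..θ, s τ * Real.cot τ)
      (nhdsWithin 0 (Set.Ioi 0)) (nhds μ_p)) :
    μ_p = α + 1 := by
  set F : ℝ → ℝ := fun θ => ∫ τ in (0:ℝ)..θ, s τ * Real.cot τ with hF
  set b : ℝ := δ / 2 with hbdef
  have hb0 : 0 < b := by positivity
  have hbδ : b < δ := by simpa [hbdef] using half_lt_self hδ0
  have hbmem : b ∈ Ioo (0:ℝ) δ := ⟨hb0, hbδ⟩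
  have hsub : Ioo (0:ℝ) b ⊆ Ioo 0 δ := Ioo_subset_Ioo le_rfl hbδ.le
  -- sin and cos positive on (0, δ)
  have hsin : ∀ x ∈ Ioo (0:ℝ) δ, 0 < Real.sin x := fun x hx =>
    Real.sin_pos_of_pos_of_lt_pi hx.1
      (hx.2.trans (hδ.trans (by linarith [Real.pi_pos])))
  have hcos : ∀ x ∈ Ioo (0:ℝ) δ, 0 < Real.cos x := fun x hx =>
    Real.cos_pos_of_mem_Ioo ⟨by linarith [Real.pi_pos, hx.1], hx.2.trans hδ⟩
  -- continuity of the integrand on (0, δ)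
  have hcont : ContinuousOn (fun τ => s τ * Real.cot τ) (Ioo 0 δ) := by
    refine hs.mul ?_
    refine (ContinuousOn.div Real.continuous_cos.continuousOn
      Real.continuous_sin.continuousOn (fun x hx => (hsin x hx).ne')).congr ?_
    intro x _
    exact Real.cot_eq_cos_div_sin x
  -- FTC : derivative of F on (0, b)
  have hFder : ∀ x ∈ Ioo (0:ℝ) b, HasDerivAt F (s x * Real.cot x) x := by
    intro x hx
    exact intervalIntegral.integral_hasDerivAt_right (hint x (hsub hx))
      (hcont.stronglyMeasurableAtFilter isOpen_Ioo x (hsub hx))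
      (hcont.continuousAt (isOpen_Ioo.mem_nhds (hsub hx)))
  -- derivative of G = sin ^ α
  have hGder : ∀ x ∈ Ioo (0:ℝ) b,
      HasDerivAt (fun θ => Real.sin θ ^ α) (Real.cos x * α * Real.sin x ^ (α - 1)) x := by
    intro x hx
    exact (Real.hasDerivAt_sin x).rpow_const (Or.inl (hsin x (hsub hx)).ne')
  have hGne : ∀ x ∈ Ioo (0:ℝ) b, Real.cos x * α * Real.sin x ^ (α - 1) ≠ 0 := by
    intro x hx
    have h1 := hcos x (hsub hx)
    have h2 : (0:ℝ) < Real.sin x ^ (α - 1) := Real.rpow_pos_of_pos (hsin x (hsub hx)) _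
    positivity
  -- F → 0 as θ → 0⁺
  have hF0 : Tendsto F (𝓝[>] (0:ℝ)) (𝓝 0) := by
    have hc : ContinuousOn F (Set.uIcc 0 b) :=
      intervalIntegral.continuousOn_primitive_interval' (hint b hbmem) Set.left_mem_uIcc
    have h0 : (0:ℝ) ∈ Set.uIcc (0:ℝ) b := Set.left_mem_uIcc
    have := (hc 0 h0)
    have hIcc : Set.uIcc (0:ℝ) b = Set.Icc 0 b := Set.uIcc_of_le hb0.le
    have hT : Tendsto F (𝓝[Set.Icc 0 b] 0) (𝓝 (F 0)) := by
      rw [← hIcc]; exact this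
    have hF00 : F 0 = 0 := intervalIntegral.integral_same
    rw [hF00] at hT
    rw [← nhdsWithin_Ioo_eq_nhdsGT hb0]
    exact hT.mono_left (nhdsWithin_mono _ Set.Ioo_subset_Icc_self)
  -- sin^α → 0
  have hG0 : Tendsto (fun θ => Real.sin θ ^ α) (𝓝[>] (0:ℝ)) (𝓝 0) := by
    have : ContinuousAt (fun θ => Real.sin θ ^ α) 0 := by
      apply ContinuousAt.comp (g := fun y : ℝ => y ^ α)
      · simpa using Real.continuousAt_rpow_const (Real.sin 0) α (Or.inr hα.le)
      · exact Real.continuous_sin.continuousAt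
    have h := this.tendsto.mono_left (nhdsWithin_le_nhds (s := Set.Ioi (0:ℝ)))
    simpa [Real.zero_rpow hα.ne'] using h
  -- quotient of derivatives tends to γ/α
  have hdiv : Tendsto (fun x => (s x * Real.cot x) /
      (Real.cos x * α * Real.sin x ^ (α - 1))) (𝓝[>] (0:ℝ)) (𝓝 (γ / α)) := by
    have h1 : Tendsto (fun θ => s θ / Real.sin θ ^ α / α) (𝓝[>] (0:ℝ)) (𝓝 (γ / α)) :=
      hγ.div_const α
    refine h1.congr' ?_
    filter_upwards [Ioo_mem_nhdsGT_of_mem ⟨le_refl (0:ℝ), hb0⟩] with x hx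
    have hsx := hsin x (hsub hx)
    have hcx := hcos x (hsub hx)
    rw [Real.cot_eq_cos_div_sin, Real.rpow_sub_one hsx.ne']
    have hsα : Real.sin x ^ α ≠ 0 := (Real.rpow_pos_of_pos hsx α).ne'
    field_simp
  -- L'Hôpital
  have hFG : Tendsto (fun x => F x / Real.sin x ^ α) (𝓝[>] (0:ℝ)) (𝓝 (γ / α)) :=
    HasDerivAt.lhopital_zero_right_on_Ioo hb0 hFder hGder hGne hF0 hG0 hdiv
  -- s/F → α
  have hγα : γ / α ≠ 0 := div_ne_zero hγ0 hα.ne'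
  have hsF : Tendsto (fun θ => s θ / F θ) (𝓝[>] (0:ℝ)) (𝓝 α) := by
    have h := hγ.div hFG hγα
    have hval : γ / (γ / α) = α := by field_simp
    rw [hval] at h
    refine h.congr' ?_
    filter_upwards [Ioo_mem_nhdsGT_of_mem ⟨le_refl (0:ℝ), hb0⟩] with x hx
    have hsα : Real.sin x ^ α ≠ 0 := (Real.rpow_pos_of_pos (hsin x (hsub hx)) α).ne'
    rcases eq_or_ne (F x) 0 with h0 | h0
    · simp [h0, hsα]
    · simp only [Pi.div_apply]
      field_simp
  have hμ' : Tendsto (fun θ => 1 + s θ / F θ) (𝓝[>] (0:ℝ)) (𝓝 (1 + α)) :=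
    tendsto_const_nhds.add hsF
  have := tendsto_nhds_unique hμ hμ'
  linarith
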